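/- Fix μ ∈ ℝ, ξ > 0 and x ∈ ℝ, and define V^ξ(t,r) = ξ·∫_t^T M(s−t, r) ds + M(T−t, r)·(x + (μ−ξ)(T−t)) on [0,T] × ℝ. Then for every (t,r) ∈ (0,T) × ℝ, ∂_t V^ξ(t,r) + a(b−r)·∂_r V^ξ(t,r) + (δ²/2)·∂_{rr} V^ξ(t,r) − r·V^ξ(t,r) + μ·M(T−t,r) + ξ·(1 − M(T−t,r)) = 0. -/

import Mathlib

open Real Filter MeasureTheory intervalIntegral

noncomputable def M (a δ b u r : ℝ) : ℝ :=
  Real.exp (-(b - δ^2/(2*a^2))*u + ((b - δ^2/(2*a^2)) - r)/a * (1 - Real.exp (-(a*u)))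
    - δ^2/(4*a^3) * (1 - Real.exp (-(a*u)))^2)

noncomputable def Mder (a δ b u r : ℝ) : ℝ :=
  -(1 - Real.exp (-(a*u)))/a * M a δ b u r

noncomputable def Mder2 (a δ b u r : ℝ) : ℝ :=
  ((1 - Real.exp (-(a*u)))/a)^2 * M a δ b u r

noncomputable def Mu' (a δ b u r : ℝ) : ℝ :=
  (-(b - δ^2/(2*a^2)) + ((b - δ^2/(2*a^2)) - r) * Real.exp (-(a*u))
    - δ^2/(2*a^2) * (1 - Real.exp (-(a*u))) * Real.exp (-(a*u))) * M a δ b u r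

lemma continuous_M (a δ b : ℝ) : Continuous fun p : ℝ × ℝ => M a δ b p.1 p.2 := by
  unfold M; fun_prop

lemma continuous_Mder (a δ b : ℝ) : Continuous fun p : ℝ × ℝ => Mder a δ b p.1 p.2 := by
  unfold Mder M; fun_prop

lemma continuous_Mder2 (a δ b : ℝ) : Continuous fun p : ℝ × ℝ => Mder2 a δ b p.1 p.2 := by
  unfold Mder2 M; fun_prop

lemma continuous_Mu' (a δ b r : ℝ) : Continuous fun u => Mu' a δ b u r := by
  unfold Mu' M; fun_prop

lemma continuous_M_swap (a δ b : ℝ) : Continuous fun p : ℝ × ℝ => M a δ b p.2 p.1 := by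
  unfold M; fun_prop

lemma continuous_Mder_swap (a δ b : ℝ) : Continuous fun p : ℝ × ℝ => Mder a δ b p.2 p.1 := by
  unfold Mder M; fun_prop

lemma continuous_Mder2_swap (a δ b : ℝ) : Continuous fun p : ℝ × ℝ => Mder2 a δ b p.2 p.1 := by
  unfold Mder2 M; fun_prop

lemma continuous_M_u (a δ b r : ℝ) : Continuous fun u => M a δ b u r := by
  unfold M; fun_prop

lemma continuous_Mder_u (a δ b r : ℝ) : Continuous fun u => Mder a δ b u r := by
  unfold Mder M; fun_prop

lemma continuous_Mder2_u (a δ b r : ℝ) : Continuous fun u => Mder2 a δ b u r := by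
  unfold Mder2 M; fun_prop

lemma M_zero (a δ b r : ℝ) : M a δ b 0 r = 1 := by
  simp [M]

lemma hasDerivAt_M_r (a δ b u : ℝ) (r : ℝ) :
    HasDerivAt (fun r' => M a δ b u r') (Mder a δ b u r) r := by
  have h1 : HasDerivAt (fun r' : ℝ => ((b - δ^2/(2*a^2)) - r')/a * (1 - Real.exp (-(a*u))))
      (-1/a * (1 - Real.exp (-(a*u)))) r := by
    simpa using (((hasDerivAt_id r).const_sub (b - δ^2/(2*a^2))).div_const a).mul_const
      (1 - Real.exp (-(a*u)))
  have h0 := (h1.const_add (-(b - δ^2/(2*a^2))*u)).sub_const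
    (δ^2/(4*a^3) * (1 - Real.exp (-(a*u)))^2)
  simp only [Mder, M]
  convert h0.exp using 1
  ring

lemma hasDerivAt_Mder_r (a δ b u : ℝ) (r : ℝ) :
    HasDerivAt (fun r' => Mder a δ b u r') (Mder2 a δ b u r) r := by
  have h := (hasDerivAt_M_r a δ b u r).const_mul (-(1 - Real.exp (-(a*u)))/a)
  unfold Mder Mder2 at *
  refine h.congr_deriv ?_
  ring

lemma hasDerivAt_M_u (a δ b r : ℝ) (ha : a ≠ 0) (u : ℝ) :
    HasDerivAt (fun u' => M a δ b u' r) (Mu' a δ b u r) u := by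
  have hE : HasDerivAt (fun u' : ℝ => Real.exp (-(a*u'))) (-a * Real.exp (-(a*u))) u := by
    have h1 : HasDerivAt (fun u' : ℝ => -(a*u')) (-a) u := by
      simpa [Pi.neg_def] using ((hasDerivAt_id u).const_mul a).neg
    simpa [mul_comm] using h1.exp
  have h2 : HasDerivAt (fun u' : ℝ => 1 - Real.exp (-(a*u'))) (a * Real.exp (-(a*u))) u := by
    simpa using hE.const_sub 1
  have hlin : HasDerivAt (fun u' : ℝ => -(b - δ^2/(2*a^2))*u') (-(b - δ^2/(2*a^2))) u := by
    simpa only [id_eq, mul_one] using (hasDerivAt_id u).const_mul (-(b - δ^2/(2*a^2)))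
  have h3 := (hlin.add ((h2.const_mul (((b - δ^2/(2*a^2)) - r)/a)))).sub
    ((h2.pow 2).const_mul (δ^2/(4*a^3)))
  have h4 : HasDerivAt (fun u' => M a δ b u' r) (M a δ b u r *
      (-(b - δ^2/(2*a^2)) + (b - δ^2/(2*a^2) - r) / a * (a * Real.exp (-(a * u)))
        - δ^2/(4*a^3) * (((2:ℕ):ℝ) * (1 - Real.exp (-(a * u))) ^ (2 - 1) * (a * Real.exp (-(a * u)))))) u :=
    h3.exp
  refine h4.congr_deriv ?_
  simp only [Mu', M]
  field_simp
  ring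

lemma M_pde (a δ b : ℝ) (ha : a ≠ 0) (u r : ℝ) :
    Mu' a δ b u r = a*(b - r) * Mder a δ b u r + δ^2/2 * Mder2 a δ b u r - r * M a δ b u r := by
  unfold Mu' Mder Mder2
  field_simp
  ring

lemma hasDerivAt_param_integral {F F' : ℝ → ℝ → ℝ}
    (hF : Continuous fun p : ℝ × ℝ => F p.1 p.2)
    (hF' : Continuous fun p : ℝ × ℝ => F' p.1 p.2)
    (hd : ∀ u x, HasDerivAt (fun x' => F x' u) (F' x u) x) (y r : ℝ) :
    HasDerivAt (fun x => ∫ u in (0:ℝ)..y, F x u) (∫ u in (0:ℝ)..y, F' r u) r := by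
  obtain ⟨C, hC⟩ := ((isCompact_closedBall r 1).prod isCompact_uIcc).exists_bound_of_continuousOn
    hF'.continuousOn
  refine (intervalIntegral.hasDerivAt_integral_of_dominated_loc_of_deriv_le
    (F := fun x u => F x u) (F' := fun x u => F' x u) (bound := fun _ => C)
    (Metric.ball_mem_nhds r one_pos) ?_ ?_ ?_ ?_ ?_ ?_).2
  · exact Eventually.of_forall fun x =>
      (hF.comp (Continuous.prodMk_right x)).aestronglyMeasurable
  · exact (hF.comp (Continuous.prodMk_right r)).intervalIntegrable 0 y
  · exact (hF'.comp (Continuous.prodMk_right r)).aestronglyMeasurable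
  · refine Eventually.of_forall fun u hu x hx => ?_
    simpa using hC (x, u) (Set.mk_mem_prod (Metric.ball_subset_closedBall hx)
      (Set.uIoc_subset_uIcc hu))
  · exact intervalIntegrable_const
  · exact Eventually.of_forall fun u _ x _ => hd u x
/-- The return function of the strategy "always pay at the maximal rate ξ":
`V^ξ(t,r) = ξ·∫_t^T M(s−t,r) ds + M(T−t,r)(x + (μ−ξ)(T−t))`. -/
noncomputable def Vxi (a δ b T μ ξ x t r : ℝ) : ℝ :=
  ξ * (∫ s in t..T, M a δ b (s - t) r) + M a δ b (T - t) r * (x + (μ - ξ)*(T - t))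

set_option maxHeartbeats 1600000 in
/-- `V^ξ` satisfies
`∂_t V^ξ + a(b−r)∂_r V^ξ + (δ²/2)∂_{rr} V^ξ − rV^ξ + μM(T−t,r) + ξ(1 − M(T−t,r)) = 0`
on `(0,T) × ℝ`. -/
theorem Vxi_solves_pde (a δ b T μ ξ x : ℝ) (ha : 0 < a) (hδ : 0 < δ) (hT : 0 < T)
    (hξ : 0 < ξ) :
    ∀ t : ℝ, 0 < t → t < T → ∀ r : ℝ,
      deriv (fun t' => Vxi a δ b T μ ξ x t' r) t
        + a*(b - r) * deriv (fun r' => Vxi a δ b T μ ξ x t r') r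
        + δ^2/2 * deriv (deriv (fun r' => Vxi a δ b T μ ξ x t r')) r
        - r * Vxi a δ b T μ ξ x t r
        + μ * M a δ b (T - t) r + ξ * (1 - M a δ b (T - t) r) = 0 := by
  intro t ht htT r
  have ha' : a ≠ 0 := ha.ne'
  -- rewrite Vxi via change of variables
  have hVeq : ∀ t' r', Vxi a δ b T μ ξ x t' r'
      = ξ * (∫ u in (0:ℝ)..(T - t'), M a δ b u r')
        + M a δ b (T - t') r' * (x + (μ - ξ)*(T - t')) := by
    intro t' r'
    unfold Vxi
    rw [intervalIntegral.integral_comp_sub_right (fun s => M a δ b s r') t', sub_self]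
  -- continuity in u
  have hcM_r : ∀ r', Continuous fun u => M a δ b u r' := fun r' => continuous_M_u a δ b r'
  have hcMu_r : Continuous fun u => Mu' a δ b u r := continuous_Mu' a δ b r
  have hcMder_r : Continuous fun u => Mder a δ b u r := continuous_Mder_u a δ b r
  have hcMder2_r : Continuous fun u => Mder2 a δ b u r := continuous_Mder2_u a δ b r
  -- derivative in r
  have hVr : ∀ r', HasDerivAt (fun r'' => Vxi a δ b T μ ξ x t r'')
      (ξ * (∫ u in (0:ℝ)..(T - t), Mder a δ b u r')
        + Mder a δ b (T - t) r' * (x + (μ - ξ)*(T - t))) r' := by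
    intro r'
    have h1 := hasDerivAt_param_integral
      (F := fun r'' u => M a δ b u r'') (F' := fun r'' u => Mder a δ b u r'')
      (continuous_M_swap a δ b)
      (continuous_Mder_swap a δ b)
      (fun u x' => hasDerivAt_M_r a δ b u x') (T - t) r'
    have h2 := (hasDerivAt_M_r a δ b (T - t) r').mul_const (x + (μ - ξ)*(T - t))
    have h3 := (h1.const_mul ξ).add h2
    have hfun : (fun r'' => Vxi a δ b T μ ξ x t r'')
        = fun r'' => ξ * (∫ u in (0:ℝ)..(T - t), M a δ b u r'')
            + M a δ b (T - t) r'' * (x + (μ - ξ)*(T - t)) :=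
      funext fun r'' => hVeq t r''
    rw [hfun]
    exact h3
  -- second derivative in r
  have hderiv1 : deriv (fun r'' => Vxi a δ b T μ ξ x t r'')
      = fun r' => ξ * (∫ u in (0:ℝ)..(T - t), Mder a δ b u r')
          + Mder a δ b (T - t) r' * (x + (μ - ξ)*(T - t)) :=
    funext fun r' => (hVr r').deriv
  have hVrr : HasDerivAt (fun r' => ξ * (∫ u in (0:ℝ)..(T - t), Mder a δ b u r')
        + Mder a δ b (T - t) r' * (x + (μ - ξ)*(T - t)))
      (ξ * (∫ u in (0:ℝ)..(T - t), Mder2 a δ b u r)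
        + Mder2 a δ b (T - t) r * (x + (μ - ξ)*(T - t))) r := by
    have h1 := hasDerivAt_param_integral
      (F := fun r'' u => Mder a δ b u r'') (F' := fun r'' u => Mder2 a δ b u r'')
      (continuous_Mder_swap a δ b)
      (continuous_Mder2_swap a δ b)
      (fun u x' => hasDerivAt_Mder_r a δ b u x') (T - t) r
    exact (h1.const_mul ξ).add
      ((hasDerivAt_Mder_r a δ b (T - t) r).mul_const (x + (μ - ξ)*(T - t)))
  -- derivative in t
  have h2t : HasDerivAt (fun t' : ℝ => T - t') (-1) t := by
    simpa using (hasDerivAt_id t).const_sub T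
  have hG : HasDerivAt (fun t' => ∫ u in (0:ℝ)..(T - t'), M a δ b u r)
      (-(M a δ b (T - t) r)) t := by
    have h1 : HasDerivAt (fun z => ∫ u in (0:ℝ)..z, M a δ b u r)
        (M a δ b (T - t) r) (T - t) :=
      ((hcM_r r).integral_hasStrictDerivAt 0 (T - t)).hasDerivAt
    simpa [Function.comp_def] using h1.comp t h2t
  have hMt : HasDerivAt (fun t' => M a δ b (T - t') r) (-(Mu' a δ b (T - t) r)) t := by
    simpa [Function.comp_def] using (hasDerivAt_M_u a δ b r ha' (T - t)).comp t h2t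
  have hcoef : HasDerivAt (fun t' : ℝ => x + (μ - ξ)*(T - t')) (-(μ - ξ)) t := by
    have h : HasDerivAt (fun t' : ℝ => (μ - ξ)*(T - t')) (-(μ - ξ)) t := by
      simpa using h2t.const_mul (μ - ξ)
    exact h.const_add x
  have hVt : HasDerivAt (fun t' => Vxi a δ b T μ ξ x t' r)
      (ξ * -(M a δ b (T - t) r)
        + (-(Mu' a δ b (T - t) r) * (x + (μ - ξ)*(T - t))
            + M a δ b (T - t) r * -(μ - ξ))) t := by
    have hfun : (fun t' => Vxi a δ b T μ ξ x t' r)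
        = fun t' => ξ * (∫ u in (0:ℝ)..(T - t'), M a δ b u r)
            + M a δ b (T - t') r * (x + (μ - ξ)*(T - t')) :=
      funext fun t' => hVeq t' r
    rw [hfun]
    exact (hG.const_mul ξ).add (hMt.mul hcoef)
  -- FTC for Mu'
  have hint : (∫ u in (0:ℝ)..(T - t), Mu' a δ b u r) = M a δ b (T - t) r - 1 := by
    rw [intervalIntegral.integral_eq_sub_of_hasDerivAt
      (fun u _ => hasDerivAt_M_u a δ b r ha' u)
      (hcMu_r.intervalIntegrable 0 (T - t)), M_zero]
  -- combine integrals
  have hcomb : a*(b - r) * (∫ u in (0:ℝ)..(T - t), Mder a δ b u r)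
      + δ^2/2 * (∫ u in (0:ℝ)..(T - t), Mder2 a δ b u r)
      - r * (∫ u in (0:ℝ)..(T - t), M a δ b u r) = M a δ b (T - t) r - 1 := by
    rw [← intervalIntegral.integral_const_mul, ← intervalIntegral.integral_const_mul,
      ← intervalIntegral.integral_const_mul,
      ← intervalIntegral.integral_add (f := fun u => a*(b - r) * Mder a δ b u r)
        (g := fun u => δ^2/2 * Mder2 a δ b u r)
        ((continuous_const.mul hcMder_r).intervalIntegrable 0 (T - t))
        ((continuous_const.mul hcMder2_r).intervalIntegrable 0 (T - t)),
      ← intervalIntegral.integral_sub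
        (f := fun u => a*(b - r) * Mder a δ b u r + δ^2/2 * Mder2 a δ b u r)
        (g := fun u => r * M a δ b u r)
        (((continuous_const.mul hcMder_r).add (continuous_const.mul hcMder2_r)).intervalIntegrable 0 (T - t))
        ((continuous_const.mul (hcM_r r)).intervalIntegrable 0 (T - t))]
    rw [show (∫ u in (0:ℝ)..(T - t), (a*(b - r) * Mder a δ b u r
        + δ^2/2 * Mder2 a δ b u r - r * M a δ b u r))
        = ∫ u in (0:ℝ)..(T - t), Mu' a δ b u r from
      intervalIntegral.integral_congr fun u _ => (M_pde a δ b ha' u r).symm]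
    exact hint
  rw [hVt.deriv, (hVr r).deriv, hderiv1, hVrr.deriv, hVeq t r]
  linear_combination ξ * hcomb - (x + (μ - ξ)*(T - t)) * (M_pde a δ b ha' (T - t) r)
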